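/- (Representation theorem for 2D-Shapley, uniqueness.) Let n, m ≥ 1, N = {1,…,n}, M = {1,…,m}, and let ψ assign to every utility function h : 2^N × 2^M → ℝ a real matrix (ψ_{ij}(h))_{i∈N, j∈M}. Suppose ψ satisfies: (2D-linearity) ψ_{ij}(β₁h₁ + β₂h₂) = β₁ψ_{ij}(h₁) + β₂ψ_{ij}(h₂) for all utility functions h₁, h₂ and all β₁, β₂ ∈ ℝ; (2D-dummy) if M_h^{i,j}(S,F) = c for all S ⊆ N∖{i}, F ⊆ M∖{j}, then ψ_{ij}(h) = c; (2D-symmetry) ψ_{π₁(i),π₂(j)}((π₁π₂)h) = ψ_{ij}(h) for all permutations π₁ of N and π₂ of M, where [(π₁π₂)h](S,F) := h(π₁(S), π₂(F)); and (2D-efficiency) Σ_{i∈N} Σ_{j∈M} ψ_{ij}(h) = h(N,M) for all h. Then necessarily ψ_{ij}(h) = Σ_{S ⊆ N∖{i}} Σ_{F ⊆ M∖{j}} [|S|!(n−|S|−1)!/n!] · [|F|!(m−|F|−1)!/m!] · M_h^{i,j}(S,F) for every h, i, j. -/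

import Mathlib

open Finset Nat

/-- Marginal contribution of block `(i,j)` to `(S,F)`:
`M_h^{i,j}(S,F) = h(S∪{i}, F∪{j}) + h(S,F) − h(S∪{i}, F) − h(S, F∪{j})`. -/
noncomputable def margin {n m : ℕ} (h : Finset (Fin n) → Finset (Fin m) → ℝ)
    (i : Fin n) (j : Fin m) (S : Finset (Fin n)) (F : Finset (Fin m)) : ℝ :=
  h (insert i S) (insert j F) + h S F - h (insert i S) F - h S (insert j F)

/-- Shapley weight `s!(n−s−1)!/n!`. -/
noncomputable def shapWeight (n s : ℕ) : ℝ := (s ! * (n - s - 1)! : ℕ) / (n ! : ℕ)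

/-- The two-dimensional Shapley value
`ψ²ᵈ_{ij}(h) = Σ_{S ⊆ N∖{i}} Σ_{F ⊆ M∖{j}} [|S|!(n−|S|−1)!/n!]·[|F|!(m−|F|−1)!/m!]·M_h^{i,j}(S,F)`. -/
noncomputable def psi2d {n m : ℕ} (h : Finset (Fin n) → Finset (Fin m) → ℝ)
    (i : Fin n) (j : Fin m) : ℝ :=
  ∑ S ∈ (univ \ {i}).powerset, ∑ F ∈ (univ \ {j}).powerset,
    shapWeight n S.card * shapWeight m F.card * margin h i j S F


section Aux
variable {α : Type*} [DecidableEq α]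

lemma sum_filter_superset {β : Type*} [AddCommMonoid β] {A B : Finset α} (hAB : A ⊆ B)
    (f : Finset α → β) :
    ∑ S ∈ B.powerset with A ⊆ S, f S = ∑ U ∈ (B \ A).powerset, f (A ∪ U) := by
  refine Finset.sum_nbij' (fun S => S \ A) (fun U => A ∪ U) ?_ ?_ ?_ ?_ ?_
  · intro S hS
    rw [mem_filter, mem_powerset] at hS
    exact mem_powerset.2 (sdiff_subset_sdiff hS.1 Subset.rfl)
  · intro U hU
    rw [mem_powerset] at hU
    exact mem_filter.2 ⟨mem_powerset.2 (union_subset hAB (hU.trans sdiff_subset)), subset_union_left⟩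
  · intro S hS
    rw [mem_filter, mem_powerset] at hS
    exact union_sdiff_of_subset hS.2
  · intro U hU
    rw [mem_powerset] at hU
    exact union_sdiff_cancel_left (disjoint_of_subset_right hU sdiff_disjoint.symm)
  · intro S hS
    rw [mem_filter, mem_powerset] at hS
    rw [union_sdiff_of_subset hS.2]

lemma alt_sum_real (x : Finset α) :
    (∑ U ∈ x.powerset, (-1 : ℝ) ^ U.card) = if x = ∅ then 1 else 0 := by
  have h := Finset.sum_powerset_neg_one_pow_card (x := x)
  have h2 := congrArg (fun z : ℤ => (z : ℝ)) h
  push_cast at h2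
  exact h2

lemma mobius1 (f : Finset α → ℝ) (S : Finset α) :
    ∑ T ∈ S.powerset, ∑ A ∈ T.powerset, (-1 : ℝ) ^ (T.card - A.card) * f A = f S := by
  rw [Finset.sum_comm' (t' := S.powerset) (s' := fun A => S.powerset.filter (fun T => A ⊆ T))
    (by intro T A
        simp only [mem_powerset, mem_filter]
        constructor
        · rintro ⟨h1, h2⟩; exact ⟨⟨h1, h2⟩, h2.trans h1⟩
        · rintro ⟨⟨h1, h2⟩, h3⟩; exact ⟨h1, h2⟩)]
  have inner : ∀ A ∈ S.powerset,
      (∑ T ∈ S.powerset with A ⊆ T, (-1 : ℝ) ^ (T.card - A.card) * f A)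
        = if A = S then f A else 0 := by
    intro A hA
    rw [mem_powerset] at hA
    rw [sum_filter_superset hA]
    have : ∀ U ∈ (S \ A).powerset, (-1 : ℝ) ^ ((A ∪ U).card - A.card) * f A
        = (-1 : ℝ) ^ U.card * f A := by
      intro U hU
      rw [mem_powerset] at hU
      have hd : Disjoint A U := disjoint_of_subset_right hU sdiff_disjoint.symm
      rw [card_union_of_disjoint hd]
      congr 1
      congr 1
      omega
    rw [Finset.sum_congr rfl this, ← Finset.sum_mul, alt_sum_real]
    by_cases hAS : A = S
    · simp [hAS, sdiff_eq_empty_iff_subset.2 (le_refl S)]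
    · have : ¬ (S \ A = ∅) := by
        rw [sdiff_eq_empty_iff_subset]
        intro hSA
        exact hAS (Subset.antisymm hA hSA)
      simp [this, hAS]
  rw [Finset.sum_congr rfl inner, Finset.sum_ite_eq' S.powerset S f]
  simp

end Aux

lemma key_nat (t n : ℕ) (ht : 1 ≤ t) (htn : t ≤ n) :
    t * ∑ k ∈ range (n - t + 1), (n - t).choose k * ((t - 1 + k)! * (n - t - k)!) = n ! := by
  have hterm : ∀ k ∈ range (n - t + 1),
      (n - t).choose k * ((t - 1 + k)! * (n - t - k)!)
        = (k + (t - 1)).choose (t - 1) * ((t - 1)! * (n - t)!) := by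
    intro k hk
    rw [mem_range] at hk
    have hk' : k ≤ n - t := by omega
    have h1 : (t - 1 + k).choose k * k ! * (t - 1 + k - k)! = (t - 1 + k)! :=
      Nat.choose_mul_factorial_mul_factorial (Nat.le_add_left k (t - 1))
    have h2 : (n - t).choose k * k ! * (n - t - k)! = (n - t)! :=
      Nat.choose_mul_factorial_mul_factorial hk'
    have h3 : t - 1 + k - k = t - 1 := by omega
    rw [h3] at h1
    have h4 : (k + (t - 1)).choose (t - 1) = (t - 1 + k).choose k := by
      rw [Nat.add_comm k (t - 1)]
      exact Nat.choose_symm_add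
    calc (n - t).choose k * ((t - 1 + k)! * (n - t - k)!)
        = (n - t).choose k * (((t - 1 + k).choose k * k ! * (t - 1)!) * (n - t - k)!) := by rw [h1]
      _ = (t - 1 + k).choose k * ((t - 1)! * ((n - t).choose k * k ! * (n - t - k)!)) := by ring
      _ = (k + (t - 1)).choose (t - 1) * ((t - 1)! * (n - t)!) := by rw [h2, h4]
  rw [Finset.sum_congr rfl hterm, ← Finset.sum_mul, Nat.sum_range_add_choose (n - t) (t - 1)]
  have h5 : n - t + (t - 1) + 1 = n := by omega
  have h6 : t - 1 + 1 = t := by omega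
  rw [h5, h6]
  have := Nat.choose_mul_factorial_mul_factorial htn
  calc t * (n.choose t * ((t - 1)! * (n - t)!)) = n.choose t * ((t * (t-1)!) * (n-t)!) := by ring
    _ = n.choose t * (t ! * (n - t)!) := by rw [← Nat.succ_pred_eq_of_pos (by omega : 0 < t)]; simp [Nat.factorial_succ]
    _ = n ! := by rw [← this]; ring

lemma weight_sum (n t : ℕ) (ht : 1 ≤ t) (htn : t ≤ n) :
    ∑ k ∈ range (n - t + 1), ((n - t).choose k : ℝ) * shapWeight n (t - 1 + k) = 1 / t := by
  have hterm : ∀ k ∈ range (n - t + 1),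
      ((n - t).choose k : ℝ) * shapWeight n (t - 1 + k)
        = (((n - t).choose k * ((t - 1 + k)! * (n - t - k)!) : ℕ) : ℝ) / (n ! : ℕ) := by
    intro k hk
    rw [mem_range] at hk
    have h3 : n - (t - 1 + k) - 1 = n - t - k := by omega
    rw [shapWeight, h3]
    push_cast
    ring
  rw [Finset.sum_congr rfl hterm, ← Finset.sum_div, ← Nat.cast_sum]
  have hkey := key_nat t n ht htn
  have hne : (n ! : ℝ) ≠ 0 := by exact_mod_cast Nat.factorial_ne_zero n
  have htne : (t : ℝ) ≠ 0 := by exact_mod_cast (by omega : t ≠ 0)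
  rw [div_eq_div_iff hne htne, one_mul]
  exact_mod_cast congrArg (fun z : ℕ => (z : ℝ))
    (by rw [Nat.mul_comm] at hkey; exact hkey :
      (∑ k ∈ range (n - t + 1), (n - t).choose k * ((t - 1 + k)! * (n - t - k)!)) * t = n !)

lemma sum_shap_filter {n : ℕ} (i : Fin n) (A : Finset (Fin n)) (hA : A ⊆ univ \ {i}) :
    ∑ S ∈ (univ \ {i} : Finset (Fin n)).powerset, (if A ⊆ S then shapWeight n S.card else 0)
      = 1 / (A.card + 1) := by
  rw [← Finset.sum_filter, sum_filter_superset hA]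
  have hterm : ∀ U ∈ ((univ \ {i} : Finset (Fin n)) \ A).powerset,
      shapWeight n (A ∪ U).card = shapWeight n (A.card + U.card) := by
    intro U hU
    rw [mem_powerset] at hU
    have hd : Disjoint A U := disjoint_of_subset_right hU sdiff_disjoint.symm
    rw [card_union_of_disjoint hd]
  rw [Finset.sum_congr rfl hterm, Finset.sum_powerset_apply_card (fun c => shapWeight n (A.card + c))]
  have hn1 : 1 ≤ n := i.pos
  have hcard : ((univ \ {i} : Finset (Fin n))).card = n - 1 := by
    rw [card_sdiff_of_subset (by simp)]
    simp
  have hAcard : A.card ≤ n - 1 := hcard ▸ card_le_card hA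
  have hWcard : (((univ \ {i} : Finset (Fin n))) \ A).card = n - (A.card + 1) := by
    rw [card_sdiff_of_subset (by
      intro x hx
      exact hA hx ), hcard]
    omega
  have hw := weight_sum n (A.card + 1) (by omega) (by omega)
  have heq : ∀ k ∈ range (n - (A.card + 1) + 1),
      (n - (A.card + 1)).choose k • shapWeight n (A.card + k)
        = ((n - (A.card + 1)).choose k : ℝ) * shapWeight n (A.card + 1 - 1 + k) := by
    intro k hk
    rw [nsmul_eq_mul, Nat.add_sub_cancel]
  rw [hWcard, Finset.sum_congr rfl heq, hw]
  push_cast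
  ring

noncomputable def uGame {n m : ℕ} (T : Finset (Fin n)) (G : Finset (Fin m)) :
    Finset (Fin n) → Finset (Fin m) → ℝ :=
  fun S F => if T ⊆ S ∧ G ⊆ F then 1 else 0

lemma margin_uGame {n m : ℕ} (T : Finset (Fin n)) (G : Finset (Fin m)) (i : Fin n) (j : Fin m)
    (S : Finset (Fin n)) (F : Finset (Fin m)) :
    margin (uGame T G) i j S F
      = ((if T ⊆ insert i S then (1:ℝ) else 0) - (if T ⊆ S then 1 else 0))
        * ((if G ⊆ insert j F then (1:ℝ) else 0) - (if G ⊆ F then 1 else 0)) := by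
  unfold margin uGame
  by_cases h1 : T ⊆ insert i S <;> by_cases h2 : T ⊆ S <;>
    by_cases h3 : G ⊆ insert j F <;> by_cases h4 : G ⊆ F <;>
      first
        | (exact absurd (h2.trans (subset_insert _ _)) h1)
        | (exact absurd (h4.trans (subset_insert _ _)) h3)
        | (simp [h1, h2, h3, h4]; try ring)

lemma margin_uGame_zero_left {n m : ℕ} {T : Finset (Fin n)} (G : Finset (Fin m))
    {i : Fin n} (j : Fin m) (hiT : i ∉ T) (S : Finset (Fin n)) (F : Finset (Fin m))
    (hiS : i ∉ S) : margin (uGame T G) i j S F = 0 := by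
  rw [margin_uGame]
  simp only [Finset.subset_insert_iff_of_notMem hiT]
  ring

lemma margin_uGame_zero_right {n m : ℕ} (T : Finset (Fin n)) {G : Finset (Fin m)}
    (i : Fin n) {j : Fin m} (hjG : j ∉ G) (S : Finset (Fin n)) (F : Finset (Fin m))
    (hjF : j ∉ F) : margin (uGame T G) i j S F = 0 := by
  rw [margin_uGame]
  simp only [Finset.subset_insert_iff_of_notMem hjG]
  ring

lemma margin_uGame_main {n m : ℕ} {T : Finset (Fin n)} {G : Finset (Fin m)}
    {i : Fin n} {j : Fin m} (hiT : i ∈ T) (hjG : j ∈ G)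
    {S : Finset (Fin n)} {F : Finset (Fin m)} (hiS : i ∉ S) (hjF : j ∉ F) :
    margin (uGame T G) i j S F
      = (if T.erase i ⊆ S then (1:ℝ) else 0) * (if G.erase j ⊆ F then (1:ℝ) else 0) := by
  rw [margin_uGame]
  simp only [Finset.subset_insert_iff]
  have h2 : ¬ T ⊆ S := fun hc => hiS (hc hiT)
  have h4 : ¬ G ⊆ F := fun hc => hjF (hc hjG)
  rw [if_neg h2, if_neg h4]
  ring

lemma psi2d_uGame_zero_left {n m : ℕ} {T : Finset (Fin n)} (G : Finset (Fin m))
    {i : Fin n} (j : Fin m) (hiT : i ∉ T) : psi2d (uGame T G) i j = 0 := by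
  unfold psi2d
  refine Finset.sum_eq_zero fun S hS => Finset.sum_eq_zero fun F hF => ?_
  rw [mem_powerset] at hS
  have hiS : i ∉ S := fun hc => by simpa using hS hc
  rw [margin_uGame_zero_left G j hiT S F hiS, mul_zero]

lemma psi2d_uGame_zero_right {n m : ℕ} (T : Finset (Fin n)) {G : Finset (Fin m)}
    (i : Fin n) {j : Fin m} (hjG : j ∉ G) : psi2d (uGame T G) i j = 0 := by
  unfold psi2d
  refine Finset.sum_eq_zero fun S hS => Finset.sum_eq_zero fun F hF => ?_
  rw [mem_powerset] at hF
  have hjF : j ∉ F := fun hc => by simpa using hF hc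
  rw [margin_uGame_zero_right T i hjG S F hjF, mul_zero]

lemma psi2d_uGame_main {n m : ℕ} {T : Finset (Fin n)} {G : Finset (Fin m)}
    {i : Fin n} {j : Fin m} (hiT : i ∈ T) (hjG : j ∈ G) :
    psi2d (uGame T G) i j = (1 / T.card) * (1 / G.card) := by
  unfold psi2d
  have hstep : ∀ S ∈ (univ \ {i} : Finset (Fin n)).powerset,
      ∀ F ∈ (univ \ {j} : Finset (Fin m)).powerset,
      shapWeight n S.card * shapWeight m F.card * margin (uGame T G) i j S F
        = (if T.erase i ⊆ S then shapWeight n S.card else 0)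
          * (if G.erase j ⊆ F then shapWeight m F.card else 0) := by
    intro S hS F hF
    rw [mem_powerset] at hS hF
    have hiS : i ∉ S := fun hc => by simpa using hS hc
    have hjF : j ∉ F := fun hc => by simpa using hF hc
    rw [margin_uGame_main hiT hjG hiS hjF]
    by_cases c1 : T.erase i ⊆ S <;> by_cases c2 : G.erase j ⊆ F <;> simp [c1, c2] <;> ring
  calc (∑ S ∈ (univ \ {i} : Finset (Fin n)).powerset, ∑ F ∈ (univ \ {j} : Finset (Fin m)).powerset,
      shapWeight n S.card * shapWeight m F.card * margin (uGame T G) i j S F)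
      = ∑ S ∈ (univ \ {i} : Finset (Fin n)).powerset, ∑ F ∈ (univ \ {j} : Finset (Fin m)).powerset,
        (if T.erase i ⊆ S then shapWeight n S.card else 0)
          * (if G.erase j ⊆ F then shapWeight m F.card else 0) := by
        exact Finset.sum_congr rfl fun S hS => Finset.sum_congr rfl fun F hF => hstep S hS F hF
    _ = (∑ S ∈ (univ \ {i} : Finset (Fin n)).powerset, if T.erase i ⊆ S then shapWeight n S.card else 0)
        * (∑ F ∈ (univ \ {j} : Finset (Fin m)).powerset, if G.erase j ⊆ F then shapWeight m F.card else 0) := by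
        rw [Finset.sum_mul_sum]
    _ = (1 / ((T.erase i).card + 1)) * (1 / ((G.erase j).card + 1)) := by
        rw [sum_shap_filter i (T.erase i) (by
          intro x hx
          simp only [mem_sdiff, mem_univ, mem_singleton, true_and]
          exact ne_of_mem_erase hx),
        sum_shap_filter j (G.erase j) (by
          intro x hx
          simp only [mem_sdiff, mem_univ, mem_singleton, true_and]
          exact ne_of_mem_erase hx)]
    _ = (1 / T.card) * (1 / G.card) := by
        rw [Finset.card_erase_of_mem hiT, Finset.card_erase_of_mem hjG]
        have h1 : 1 ≤ T.card := Finset.card_pos.2 ⟨i, hiT⟩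
        have h2 : 1 ≤ G.card := Finset.card_pos.2 ⟨j, hjG⟩
        have e1 : ((T.card - 1 : ℕ) : ℝ) + 1 = (T.card : ℝ) := by
          rw [Nat.cast_sub h1]; push_cast; ring
        have e2 : ((G.card - 1 : ℕ) : ℝ) + 1 = (G.card : ℝ) := by
          rw [Nat.cast_sub h2]; push_cast; ring
        rw [e1, e2]

lemma subset_image_swap_iff {k : ℕ} {T : Finset (Fin k)} {i₁ i₂ : Fin k}
    (h1 : i₁ ∈ T) (h2 : i₂ ∈ T) (S : Finset (Fin k)) :
    T ⊆ S.image (Equiv.swap i₁ i₂) ↔ T ⊆ S := by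
  set π := Equiv.swap i₁ i₂ with hπ
  have hmem : ∀ (x : Fin k) (S : Finset (Fin k)), x ∈ S.image π ↔ π x ∈ S := by
    intro x S
    rw [Finset.mem_image]
    constructor
    · rintro ⟨y, hy, rfl⟩
      rwa [hπ, Equiv.swap_apply_self]
    · intro hx
      exact ⟨π x, hx, by rw [hπ, Equiv.swap_apply_self]⟩
  have hclosed : ∀ x ∈ T, π x ∈ T := by
    intro x hx
    by_cases hxi : x = i₁
    · rw [hxi, hπ, Equiv.swap_apply_left]; exact h2
    · by_cases hxj : x = i₂
      · rw [hxj, hπ, Equiv.swap_apply_right]; exact h1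
      · rw [hπ, Equiv.swap_apply_of_ne_of_ne hxi hxj]; exact hx
  constructor
  · intro hsub x hx
    have h3 : π x ∈ T := hclosed x hx
    have h4 : π (π x) ∈ S := (hmem (π x) S).1 (hsub h3)
    rwa [hπ, Equiv.swap_apply_self] at h4
  · intro hsub x hx
    exact (hmem x S).2 (hsub (hclosed x hx))

lemma psi_uGame_main {n m : ℕ}
    (ψ : (Finset (Fin n) → Finset (Fin m) → ℝ) → Fin n → Fin m → ℝ)
    (hdummy : ∀ (h : Finset (Fin n) → Finset (Fin m) → ℝ) (i : Fin n) (j : Fin m) (c : ℝ),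
      (∀ (S : Finset (Fin n)) (F : Finset (Fin m)), i ∉ S → j ∉ F →
        margin h i j S F = c) → ψ h i j = c)
    (hsym : ∀ (h : Finset (Fin n) → Finset (Fin m) → ℝ)
      (π₁ : Equiv.Perm (Fin n)) (π₂ : Equiv.Perm (Fin m)) (i : Fin n) (j : Fin m),
      ψ (fun S F => h (S.image π₁) (F.image π₂)) (π₁ i) (π₂ j) = ψ h i j)
    (heff : ∀ h : Finset (Fin n) → Finset (Fin m) → ℝ,
      ∑ i : Fin n, ∑ j : Fin m, ψ h i j = h univ univ)
    {T : Finset (Fin n)} {G : Finset (Fin m)} {i : Fin n} {j : Fin m}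
    (hiT : i ∈ T) (hjG : j ∈ G) :
    ψ (uGame T G) i j = (1 / T.card) * (1 / G.card) := by
  have hzero : ∀ (i' : Fin n) (j' : Fin m), i' ∉ T ∨ j' ∉ G → ψ (uGame T G) i' j' = 0 := by
    rintro i' j' (hc | hc)
    · exact hdummy _ i' j' 0 (fun S F hiS hjF => margin_uGame_zero_left G j' hc S F hiS)
    · exact hdummy _ i' j' 0 (fun S F hiS hjF => margin_uGame_zero_right T i' hc S F hjF)
  have hswap1 : ∀ i₁ i₂, i₁ ∈ T → i₂ ∈ T → ∀ j', ψ (uGame T G) i₂ j' = ψ (uGame T G) i₁ j' := by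
    intro i₁ i₂ h1 h2 j'
    have key := hsym (uGame T G) (Equiv.swap i₁ i₂) (Equiv.refl _) i₁ j'
    rw [Equiv.swap_apply_left] at key
    have hfun : (fun S F => uGame T G (S.image (Equiv.swap i₁ i₂)) (F.image (Equiv.refl (Fin m))))
        = uGame T G := by
      funext S F
      have himg : F.image (Equiv.refl (Fin m)) = F := by simp
      rw [himg]
      unfold uGame
      exact if_congr (and_congr_left' (subset_image_swap_iff h1 h2 S)) rfl rfl
    rw [hfun] at key
    exact key.symm ▸ key
  have hswap2 : ∀ j₁ j₂, j₁ ∈ G → j₂ ∈ G → ∀ i', ψ (uGame T G) i' j₂ = ψ (uGame T G) i' j₁ := by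
    intro j₁ j₂ h1 h2 i'
    have key := hsym (uGame T G) (Equiv.refl _) (Equiv.swap j₁ j₂) i' j₁
    rw [Equiv.swap_apply_left] at key
    have hfun : (fun S F => uGame T G (S.image (Equiv.refl (Fin n))) (F.image (Equiv.swap j₁ j₂)))
        = uGame T G := by
      funext S F
      have himg : S.image (Equiv.refl (Fin n)) = S := by simp
      rw [himg]
      unfold uGame
      exact if_congr (and_congr_right' (subset_image_swap_iff h1 h2 F)) rfl rfl
    rw [hfun] at key
    exact key
  have hconst : ∀ i' ∈ T, ∀ j' ∈ G, ψ (uGame T G) i' j' = ψ (uGame T G) i j := by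
    intro i' hi' j' hj'
    rw [hswap1 i i' hiT hi' j', hswap2 j j' hjG hj' i]
  have heq : ∑ i' : Fin n, ∑ j' : Fin m, ψ (uGame T G) i' j'
      = (T.card : ℝ) * G.card * ψ (uGame T G) i j := by
    have hpt : ∀ (i' : Fin n) (j' : Fin m), ψ (uGame T G) i' j'
        = if i' ∈ T then (if j' ∈ G then ψ (uGame T G) i j else 0) else 0 := by
      intro i' j'
      by_cases hi' : i' ∈ T
      · by_cases hj' : j' ∈ G
        · rw [if_pos hi', if_pos hj']; exact hconst i' hi' j' hj'
        · rw [if_pos hi', if_neg hj']; exact hzero i' j' (Or.inr hj')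
      · rw [if_neg hi']; exact hzero i' j' (Or.inl hi')
    calc ∑ i' : Fin n, ∑ j' : Fin m, ψ (uGame T G) i' j'
        = ∑ i' : Fin n, ∑ j' : Fin m,
          (if i' ∈ T then (if j' ∈ G then ψ (uGame T G) i j else 0) else 0) := by
          exact Finset.sum_congr rfl fun i' _ => Finset.sum_congr rfl fun j' _ => hpt i' j'
      _ = (T.card : ℝ) * G.card * ψ (uGame T G) i j := by
          simp [Finset.sum_ite_mem, Finset.sum_const, nsmul_eq_mul]
          ring
  have hval : (1 : ℝ) = (T.card : ℝ) * G.card * ψ (uGame T G) i j := by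
    rw [← heq, heff]
    unfold uGame
    rw [if_pos ⟨subset_univ T, subset_univ G⟩]
  have hT : (0:ℝ) < T.card := by exact_mod_cast Finset.card_pos.2 ⟨i, hiT⟩
  have hG : (0:ℝ) < G.card := by exact_mod_cast Finset.card_pos.2 ⟨j, hjG⟩
  field_simp
  field_simp at hval
  linarith

noncomputable def coeff {n m : ℕ} (h : Finset (Fin n) → Finset (Fin m) → ℝ)
    (T : Finset (Fin n)) (G : Finset (Fin m)) : ℝ :=
  ∑ B ∈ G.powerset, (-1 : ℝ) ^ (G.card - B.card)
    * (∑ A ∈ T.powerset, (-1 : ℝ) ^ (T.card - A.card) * h A B)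

lemma decomp {n m : ℕ} (h : Finset (Fin n) → Finset (Fin m) → ℝ)
    (S : Finset (Fin n)) (F : Finset (Fin m)) :
    ∑ T ∈ S.powerset, ∑ G ∈ F.powerset, coeff h T G = h S F := by
  have inner : ∀ T : Finset (Fin n), ∑ G ∈ F.powerset, coeff h T G
      = ∑ A ∈ T.powerset, (-1 : ℝ) ^ (T.card - A.card) * h A F := by
    intro T
    exact mobius1 (fun B => ∑ A ∈ T.powerset, (-1 : ℝ) ^ (T.card - A.card) * h A B) F
  rw [Finset.sum_congr rfl (fun T _ => inner T)]
  exact mobius1 (fun A => h A F) S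

lemma rep (n m : ℕ) (h : Finset (Fin n) → Finset (Fin m) → ℝ)
    (S : Finset (Fin n)) (F : Finset (Fin m)) :
    h S F = ∑ p ∈ (univ : Finset (Fin n)).powerset ×ˢ (univ : Finset (Fin m)).powerset,
      coeff h p.1 p.2 * uGame p.1 p.2 S F := by
  rw [Finset.sum_product]
  have step : ∀ T : Finset (Fin n), ∑ G ∈ (univ : Finset (Fin m)).powerset,
      coeff h T G * uGame T G S F
        = if T ⊆ S then ∑ G ∈ F.powerset, coeff h T G else 0 := by
    intro T
    have e1 : ∀ G ∈ (univ : Finset (Fin m)).powerset, coeff h T G * uGame T G S F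
        = if G ⊆ F then (if T ⊆ S then coeff h T G else 0) else 0 := by
      intro G _
      unfold uGame
      by_cases c1 : T ⊆ S <;> by_cases c2 : G ⊆ F <;> simp [c1, c2]
    rw [Finset.sum_congr rfl e1, ← Finset.sum_filter]
    have e2 : (univ : Finset (Fin m)).powerset.filter (fun G => G ⊆ F) = F.powerset := by
      ext G; simp [Finset.mem_filter, Finset.mem_powerset]
    rw [e2]
    split
    · rfl
    · exact Finset.sum_eq_zero fun G _ => by simpa using (by assumption)
  rw [Finset.sum_congr rfl (fun T _ => step T), ← Finset.sum_filter]
  have e3 : (univ : Finset (Fin n)).powerset.filter (fun T => T ⊆ S) = S.powerset := by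
    ext T; simp [Finset.mem_filter, Finset.mem_powerset]
  rw [e3, decomp]

lemma lin_sum (ψ : (Finset (Fin n) → Finset (Fin m) → ℝ) → Fin n → Fin m → ℝ)
    (hlin : ∀ (h₁ h₂ : Finset (Fin n) → Finset (Fin m) → ℝ) (β₁ β₂ : ℝ)
      (i : Fin n) (j : Fin m),
      ψ (fun S F => β₁ * h₁ S F + β₂ * h₂ S F) i j = β₁ * ψ h₁ i j + β₂ * ψ h₂ i j)
    {ι : Type*} [DecidableEq ι] (s : Finset ι) (c : ι → ℝ)
    (g : ι → Finset (Fin n) → Finset (Fin m) → ℝ) (i : Fin n) (j : Fin m) :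
    ψ (fun S F => ∑ p ∈ s, c p * g p S F) i j = ∑ p ∈ s, c p * ψ (g p) i j := by
  have hzero : ψ (fun _ _ => 0) i j = 0 := by
    have := hlin (fun _ _ => 0) (fun _ _ => 0) 0 0 i j
    simpa using this
  induction s using Finset.induction_on with
  | empty => simpa using hzero
  | insert a s' ha ih =>
    have hfun : (fun S F => ∑ p ∈ insert a s', c p * g p S F)
        = fun S F => c a * g a S F + 1 * (∑ p ∈ s', c p * g p S F) := by
      funext S F
      rw [Finset.sum_insert ha, one_mul]
    rw [hfun, hlin, ih, Finset.sum_insert ha, one_mul]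

lemma psi2d_lin (h₁ h₂ : Finset (Fin n) → Finset (Fin m) → ℝ) (β₁ β₂ : ℝ)
    (i : Fin n) (j : Fin m) :
    psi2d (fun S F => β₁ * h₁ S F + β₂ * h₂ S F) i j
      = β₁ * psi2d h₁ i j + β₂ * psi2d h₂ i j := by
  unfold psi2d
  rw [Finset.mul_sum, Finset.mul_sum, ← Finset.sum_add_distrib]
  refine Finset.sum_congr rfl fun S _ => ?_
  rw [Finset.mul_sum, Finset.mul_sum, ← Finset.sum_add_distrib]
  refine Finset.sum_congr rfl fun F _ => ?_
  unfold margin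
  ring

theorem psi2d_unique {n m : ℕ} (hn : 1 ≤ n) (hm : 1 ≤ m)
    (ψ : (Finset (Fin n) → Finset (Fin m) → ℝ) → Fin n → Fin m → ℝ)
    (hlin : ∀ (h₁ h₂ : Finset (Fin n) → Finset (Fin m) → ℝ) (β₁ β₂ : ℝ)
      (i : Fin n) (j : Fin m),
      ψ (fun S F => β₁ * h₁ S F + β₂ * h₂ S F) i j = β₁ * ψ h₁ i j + β₂ * ψ h₂ i j)
    (hdummy : ∀ (h : Finset (Fin n) → Finset (Fin m) → ℝ) (i : Fin n) (j : Fin m) (c : ℝ),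
      (∀ (S : Finset (Fin n)) (F : Finset (Fin m)), i ∉ S → j ∉ F →
        margin h i j S F = c) → ψ h i j = c)
    (hsym : ∀ (h : Finset (Fin n) → Finset (Fin m) → ℝ)
      (π₁ : Equiv.Perm (Fin n)) (π₂ : Equiv.Perm (Fin m)) (i : Fin n) (j : Fin m),
      ψ (fun S F => h (S.image π₁) (F.image π₂)) (π₁ i) (π₂ j) = ψ h i j)
    (heff : ∀ h : Finset (Fin n) → Finset (Fin m) → ℝ,
      ∑ i : Fin n, ∑ j : Fin m, ψ h i j = h univ univ) :
    ∀ (h : Finset (Fin n) → Finset (Fin m) → ℝ) (i : Fin n) (j : Fin m),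
      ψ h i j = psi2d h i j := by
  intro h i j
  have key : ∀ (T : Finset (Fin n)) (G : Finset (Fin m)),
      ψ (uGame T G) i j = psi2d (uGame T G) i j := by
    intro T G
    by_cases hiT : i ∈ T
    · by_cases hjG : j ∈ G
      · rw [psi_uGame_main ψ hdummy hsym heff hiT hjG, psi2d_uGame_main hiT hjG]
      · rw [psi2d_uGame_zero_right T i hjG]
        exact hdummy _ i j 0 (fun S F hiS hjF => margin_uGame_zero_right T i hjG S F hjF)
    · rw [psi2d_uGame_zero_left G j hiT]
      exact hdummy _ i j 0 (fun S F hiS hjF => margin_uGame_zero_left G j hiT S F hiS)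
  have hrep : h = fun S F => ∑ p ∈ (univ : Finset (Fin n)).powerset ×ˢ (univ : Finset (Fin m)).powerset,
      coeff h p.1 p.2 * uGame p.1 p.2 S F :=
    funext fun S => funext fun F => rep n m h S F
  calc ψ h i j
      = ψ (fun S F => ∑ p ∈ (univ : Finset (Fin n)).powerset ×ˢ (univ : Finset (Fin m)).powerset,
          coeff h p.1 p.2 * uGame p.1 p.2 S F) i j := by rw [← hrep]
    _ = ∑ p ∈ (univ : Finset (Fin n)).powerset ×ˢ (univ : Finset (Fin m)).powerset,
          coeff h p.1 p.2 * ψ (uGame p.1 p.2) i j :=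
        lin_sum ψ hlin _ _ _ i j
    _ = ∑ p ∈ (univ : Finset (Fin n)).powerset ×ˢ (univ : Finset (Fin m)).powerset,
          coeff h p.1 p.2 * psi2d (uGame p.1 p.2) i j :=
        Finset.sum_congr rfl fun p _ => by rw [key p.1 p.2]
    _ = psi2d (fun S F => ∑ p ∈ (univ : Finset (Fin n)).powerset ×ˢ (univ : Finset (Fin m)).powerset,
          coeff h p.1 p.2 * uGame p.1 p.2 S F) i j :=
        (lin_sum psi2d psi2d_lin _ _ _ i j).symm
    _ = psi2d h i j := by rw [← hrep]
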